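/- For unit vectors x, v, w in ℝ³ with x × v ≠ 0, ⟨(x × v)/‖x × v‖, v × w⟩ = cos θ · sin θ' · cos α − cos θ' · sin θ, where θ = angle(x, v), θ' = angle(x, w), α = angle(x × v, x × w), assuming x × w ≠ 0. -/

import Mathlib

open InnerProductGeometry Real

noncomputable def cross3 (a b : EuclideanSpace ℝ (Fin 3)) : EuclideanSpace ℝ (Fin 3) :=
  (WithLp.equiv 2 (Fin 3 → ℝ)).symm
    (crossProduct ((WithLp.equiv 2 (Fin 3 → ℝ)) a) ((WithLp.equiv 2 (Fin 3 → ℝ)) b))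

lemma lagrange (a b c d : EuclideanSpace ℝ (Fin 3)) :
    (inner ℝ (cross3 a b) (cross3 c d) : ℝ) =
      inner ℝ a c * inner ℝ b d - (inner ℝ a d : ℝ) * inner ℝ b c := by
  simp [cross3, crossProduct, PiLp.inner_apply, Fin.sum_univ_three]
  ring

lemma norm_cross_eq_sin (a b : EuclideanSpace ℝ (Fin 3)) (ha : ‖a‖ = 1) (hb : ‖b‖ = 1) :
    ‖cross3 a b‖ = Real.sin (angle a b) := by
  have h := sin_angle_mul_norm_mul_norm a b
  rw [ha, hb, real_inner_self_eq_norm_sq, real_inner_self_eq_norm_sq, ha, hb] at h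
  have h2 : ‖cross3 a b‖ = Real.sqrt (inner ℝ (cross3 a b) (cross3 a b) : ℝ) := by
    rw [real_inner_self_eq_norm_sq, Real.sqrt_sq (norm_nonneg _)]
  rw [h2, lagrange, real_inner_self_eq_norm_sq, real_inner_self_eq_norm_sq, ha, hb]
  simpa [mul_comm, real_inner_comm a b] using h.symm

theorem stmt_13 (x v w : EuclideanSpace ℝ (Fin 3))
    (hx : ‖x‖ = 1) (hv : ‖v‖ = 1) (hw : ‖w‖ = 1)
    (hxv : cross3 x v ≠ 0) (hxw : cross3 x w ≠ 0) :
    (inner ℝ ((‖cross3 x v‖)⁻¹ • cross3 x v) (cross3 v w) : ℝ) =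
      Real.cos (angle x v) * Real.sin (angle x w) *
          Real.cos (angle (cross3 x v) (cross3 x w)) -
        Real.cos (angle x w) * Real.sin (angle x v) := by
  have hxx : (inner ℝ x x : ℝ) = 1 := by
    rw [real_inner_self_eq_norm_sq, hx]; norm_num
  have hvv : (inner ℝ v v : ℝ) = 1 := by
    rw [real_inner_self_eq_norm_sq, hv]; norm_num
  have hsv : ‖cross3 x v‖ = Real.sin (angle x v) := norm_cross_eq_sin x v hx hv
  have hsw : ‖cross3 x w‖ = Real.sin (angle x w) := norm_cross_eq_sin x w hx hw
  have hsvne : ‖cross3 x v‖ ≠ 0 := norm_ne_zero_iff.mpr hxv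
  have hswne : ‖cross3 x w‖ ≠ 0 := norm_ne_zero_iff.mpr hxw
  have hs2 : ‖cross3 x v‖ * ‖cross3 x v‖ = 1 - (inner ℝ x v : ℝ) * inner ℝ x v := by
    rw [← real_inner_self_eq_norm_mul_norm, lagrange, hxx, hvv, real_inner_comm x v]; ring
  rw [real_inner_smul_left, lagrange, cos_angle x v, cos_angle x w,
    cos_angle (cross3 x v) (cross3 x w), lagrange, hx, hv, hw, hxx, hvv,
    real_inner_comm x v, ← hsv, ← hsw]
  set s := ‖cross3 x v‖
  set t := ‖cross3 x w‖
  generalize ha : (inner ℝ x v : ℝ) = a at hs2 ⊢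
  generalize hb : (inner ℝ x w : ℝ) = b
  generalize hc : (inner ℝ v w : ℝ) = c
  field_simp
  linear_combination b * hs2
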